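/- Let $v : \mathbb{R} \to \mathbb{R}$ be a $C^3$ function, $v(x) = r_1\cos(k_1(x+\theta_1)) + r_2\cos(k_2(x+\theta_2))$ with $r_1 r_2 \neq 0$ and $k_1 \neq k_2$ positive integers. If $v$ is symmetric about some point $a$ (i.e., $v(a+x)=v(a-x)$ for all $x$), then $\sin(k_1(a+\theta_1)) = 0$ and $\sin(k_2(a+\theta_2)) = 0$. -/

import Mathlib

open Real

private lemma sin_deriv_aux (c1 c2 d1 d2 : ℝ)
    (h : ∀ x, c1 * Real.sin (d1 * x) + c2 * Real.sin (d2 * x) = 0) :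
    ∀ x, c1 * d1 * Real.cos (d1 * x) + c2 * d2 * Real.cos (d2 * x) = 0 := by
  intro x
  have h1 : HasDerivAt (fun x => c1 * Real.sin (d1 * x) + c2 * Real.sin (d2 * x))
      (c1 * (Real.cos (d1 * x) * d1) + c2 * (Real.cos (d2 * x) * d2)) x := by
    have := (((Real.hasDerivAt_sin (d1 * x)).comp x
      ((hasDerivAt_id x).const_mul d1)).const_mul c1).add
      (((Real.hasDerivAt_sin (d2 * x)).comp x
      ((hasDerivAt_id x).const_mul d2)).const_mul c2)
    simpa [Function.comp_def, mul_one, Pi.add_def] using this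
  have hfun : (fun x => c1 * Real.sin (d1 * x) + c2 * Real.sin (d2 * x)) =
      fun _ : ℝ => (0 : ℝ) := funext h
  rw [hfun] at h1
  have := h1.unique (hasDerivAt_const x 0)
  linarith [this]

private lemma cos_deriv_aux (c1 c2 d1 d2 : ℝ)
    (h : ∀ x, c1 * Real.cos (d1 * x) + c2 * Real.cos (d2 * x) = 0) :
    ∀ x, c1 * d1 * Real.sin (d1 * x) + c2 * d2 * Real.sin (d2 * x) = 0 := by
  intro x
  have h1 : HasDerivAt (fun x => c1 * Real.cos (d1 * x) + c2 * Real.cos (d2 * x))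
      (c1 * (-Real.sin (d1 * x) * d1) + c2 * (-Real.sin (d2 * x) * d2)) x := by
    have := (((Real.hasDerivAt_cos (d1 * x)).comp x
      ((hasDerivAt_id x).const_mul d1)).const_mul c1).add
      (((Real.hasDerivAt_cos (d2 * x)).comp x
      ((hasDerivAt_id x).const_mul d2)).const_mul c2)
    simpa [Function.comp_def, mul_one, Pi.add_def] using this
  have hfun : (fun x => c1 * Real.cos (d1 * x) + c2 * Real.cos (d2 * x)) =
      fun _ : ℝ => (0 : ℝ) := funext h
  rw [hfun] at h1
  have := h1.unique (hasDerivAt_const x 0)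
  nlinarith [this]

theorem stmt_2 (k1 k2 : ℕ) (hk1 : 0 < k1) (hk2 : 0 < k2) (hne : k1 ≠ k2)
    (r1 r2 θ1 θ2 : ℝ) (hr : r1 * r2 ≠ 0)
    (v : ℝ → ℝ)
    (hv : ∀ x, v x = r1 * Real.cos (k1 * (x + θ1)) + r2 * Real.cos (k2 * (x + θ2)))
    (a : ℝ) (hsym : ∀ x, v (a + x) = v (a - x)) :
    Real.sin (k1 * (a + θ1)) = 0 ∧ Real.sin (k2 * (a + θ2)) = 0 := by
  set c1 : ℝ := r1 * Real.sin (k1 * (a + θ1)) with hc1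
  set c2 : ℝ := r2 * Real.sin (k2 * (a + θ2)) with hc2
  have key : ∀ x, c1 * Real.sin ((k1 : ℝ) * x) + c2 * Real.sin ((k2 : ℝ) * x) = 0 := by
    intro x
    have h := hsym x
    rw [hv, hv] at h
    have e1 : (k1 : ℝ) * (a + x + θ1) = (k1 : ℝ) * (a + θ1) + (k1 : ℝ) * x := by ring
    have e2 : (k2 : ℝ) * (a + x + θ2) = (k2 : ℝ) * (a + θ2) + (k2 : ℝ) * x := by ring
    have e3 : (k1 : ℝ) * (a - x + θ1) = (k1 : ℝ) * (a + θ1) - (k1 : ℝ) * x := by ring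
    have e4 : (k2 : ℝ) * (a - x + θ2) = (k2 : ℝ) * (a + θ2) - (k2 : ℝ) * x := by ring
    rw [e1, e2, e3, e4, Real.cos_add, Real.cos_add, Real.cos_sub, Real.cos_sub] at h
    simp only [hc1, hc2]
    nlinarith [h]
  have step1 := sin_deriv_aux c1 c2 _ _ key
  have step2 := cos_deriv_aux _ _ _ _ step1
  have step2' : ∀ x, (c1 * (k1:ℝ)^2) * Real.sin ((k1:ℝ) * x) +
      (c2 * (k2:ℝ)^2) * Real.sin ((k2:ℝ) * x) = 0 := by
    intro x; have := step2 x; nlinarith [this]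
  have step3 := sin_deriv_aux _ _ _ _ step2'
  have eA : c1 * (k1:ℝ) + c2 * (k2:ℝ) = 0 := by
    have := step1 0
    simpa using this
  have eB : c1 * (k1:ℝ)^3 + c2 * (k2:ℝ)^3 = 0 := by
    have := step3 0
    simp at this
    nlinarith [this]
  have hk1' : (0:ℝ) < (k1:ℝ) := by exact_mod_cast hk1
  have hk2' : (0:ℝ) < (k2:ℝ) := by exact_mod_cast hk2
  have hkne : (k1:ℝ) ≠ (k2:ℝ) := by exact_mod_cast hne
  have hc1z : c1 = 0 := by
    have hsq : (k1:ℝ)^2 ≠ (k2:ℝ)^2 := by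
      intro hsq
      exact hkne (by nlinarith)
    have : c1 * (k1:ℝ) * ((k1:ℝ)^2 - (k2:ℝ)^2) = 0 := by nlinarith
    rcases mul_eq_zero.1 this with h' | h'
    · rcases mul_eq_zero.1 h' with h'' | h''
      · exact h''
      · exact absurd h'' (ne_of_gt hk1')
    · exact absurd (sub_eq_zero.1 h') hsq
  have hc2z : c2 = 0 := by
    rw [hc1z, zero_mul, zero_add] at eA
    have : c2 * (k2:ℝ) = 0 := eA
    rcases mul_eq_zero.1 this with h' | h'
    · exact h'
    · exact absurd h' (ne_of_gt hk2')
  have hr1 : r1 ≠ 0 := fun h => hr (by simp [h])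
  have hr2 : r2 ≠ 0 := fun h => hr (by simp [h])
  constructor
  · have := hc1z
    rw [hc1] at this
    exact (mul_eq_zero.1 this).resolve_left hr1
  · have := hc2z
    rw [hc2] at this
    exact (mul_eq_zero.1 this).resolve_left hr2
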